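/- Let S_n = ∑_{i=1}^n (−1)^{i−1} F_i denote the partial sums of the signed Fibonacci sequence (the Lucas sequence U(−1,−1), whose n-th term is (−1)^{n−1}F_n). Then for every k ≥ 1 the integer identities S_{4k} = −F_{2k}·L_{2k−1}, S_{4k+1} = F_{2k−1}·L_{2k+1}, S_{4k+2} = −F_{2k}·L_{2k+1}, and S_{4k+3} = F_{2k+2}·L_{2k} hold. Moreover, for every k ≥ 2, the largest index m such that F_m divides S_n is: m = 2k when n = 4k or n = 4k+2; m = 2k−1 when n = 4k+1; and m = 2k+2 when n = 4k+3 (i.e., in each case F_m divides |S_n| and F_{m'} does not divide |S_n| for any m' > m). -/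

import Mathlib

/-- The Lucas numbers: L 0 = 2, L 1 = 1, L (n+2) = L (n+1) + L n. -/
def lucas : ℕ → ℕ
  | 0 => 2
  | 1 => 1
  | n + 2 => lucas n + lucas (n + 1)

/-- Partial sums of the signed Fibonacci sequence U(-1,-1), whose n-th term is
(-1)^(n-1) F_n. -/
def signedFibSum (n : ℕ) : ℤ := ∑ i ∈ Finset.Icc 1 n, (-1) ^ (i - 1) * (Nat.fib i : ℤ)

lemma lucas_fib (n : ℕ) : lucas (n + 1) = Nat.fib n + Nat.fib (n + 2) := by
  induction n using Nat.twoStepInduction with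
  | zero => decide
  | one => decide
  | more n ih1 ih2 =>
    have h1 : Nat.fib (n + 2) = Nat.fib n + Nat.fib (n + 1) := Nat.fib_add_two
    have h2 : Nat.fib (n + 3) = Nat.fib (n + 1) + Nat.fib (n + 2) := Nat.fib_add_two
    have h3 : Nat.fib (n + 4) = Nat.fib (n + 2) + Nat.fib (n + 3) := Nat.fib_add_two
    have ih2' : lucas (n + 2) = Nat.fib (n + 1) + Nat.fib (n + 3) := by
      simpa [show n + 1 + 2 = n + 3 from rfl] using ih2
    rw [show lucas (n + 2 + 1) = lucas (n + 1) + lucas (n + 2) from rfl, ih1, ih2',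
      show n + 2 + 2 = n + 4 from rfl]
    omega

lemma cassini (n : ℕ) : (Nat.fib (n + 1) : ℤ) ^ 2 = Nat.fib n * Nat.fib (n + 2) + (-1) ^ n := by
  induction n with
  | zero => decide
  | succ n ih =>
    have h1 : Nat.fib (n + 2) = Nat.fib n + Nat.fib (n + 1) := Nat.fib_add_two
    have h2 : Nat.fib (n + 3) = Nat.fib (n + 1) + Nat.fib (n + 2) := Nat.fib_add_two
    push_cast [h2, h1] at ih ⊢
    rw [pow_succ]
    linear_combination -ih

lemma cassini_even (j : ℕ) :
    (Nat.fib (2 * j + 1) : ℤ) ^ 2 = Nat.fib (2 * j) * Nat.fib (2 * j + 2) + 1 := by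
  have h := cassini (2 * j)
  rwa [show ((-1 : ℤ)) ^ (2 * j) = 1 from Even.neg_one_pow ⟨j, by ring⟩] at h

lemma sfs (n : ℕ) : signedFibSum (n + 1) = (-1) ^ n * (Nat.fib n : ℤ) + 1 := by
  induction n with
  | zero => simp [signedFibSum]
  | succ n ih =>
    rw [signedFibSum, Finset.sum_Icc_succ_top (by omega)]
    rw [signedFibSum] at ih
    rw [ih]
    have h1 : Nat.fib (n + 2) = Nat.fib n + Nat.fib (n + 1) := Nat.fib_add_two
    push_cast [h1]
    ring

section idents
variable (j : ℕ)

lemma fsplit2 : Nat.fib (2*j+2) = Nat.fib (2*j) + Nat.fib (2*j+1) := Nat.fib_add_two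
lemma fsplit3 : Nat.fib (2*j+3) = Nat.fib (2*j+1) + Nat.fib (2*j+2) := Nat.fib_add_two
lemma fsplit4 : Nat.fib (2*j+4) = Nat.fib (2*j+2) + Nat.fib (2*j+3) := Nat.fib_add_two

lemma luc1 : lucas (2*j+1) = Nat.fib (2*j) + Nat.fib (2*j+2) := lucas_fib (2*j)

lemma luc2 : lucas (2*j+2) = Nat.fib (2*j+1) + Nat.fib (2*j+3) := by
  simpa [show 2*j+1+1 = 2*j+2 from rfl, show 2*j+1+2 = 2*j+3 from rfl] using lucas_fib (2*j+1)

lemma luc3 : lucas (2*j+3) = Nat.fib (2*j+2) + Nat.fib (2*j+4) := by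
  simpa [show 2*j+2+1 = 2*j+3 from rfl, show 2*j+2+2 = 2*j+4 from rfl] using lucas_fib (2*j+2)

lemma A1 : Nat.fib (4*j+3) = Nat.fib (2*j+1) * Nat.fib (2*j+1) + Nat.fib (2*j+2) * Nat.fib (2*j+2) := by
  simpa [show 2*j+1+(2*j+1)+1 = 4*j+3 by ring, show 2*j+1+1 = 2*j+2 from rfl] using Nat.fib_add (2*j+1) (2*j+1)

lemma A2 : Nat.fib (4*j+4) = Nat.fib (2*j+1) * Nat.fib (2*j+2) + Nat.fib (2*j+2) * Nat.fib (2*j+3) := by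
  simpa [show 2*j+1+(2*j+2)+1 = 4*j+4 by ring, show 2*j+1+1 = 2*j+2 from rfl,
    show 2*j+2+1 = 2*j+3 from rfl] using Nat.fib_add (2*j+1) (2*j+2)

lemma A3 : Nat.fib (4*j+5) = Nat.fib (2*j+2) * Nat.fib (2*j+2) + Nat.fib (2*j+3) * Nat.fib (2*j+3) := by
  simpa [show 2*j+2+(2*j+2)+1 = 4*j+5 by ring, show 2*j+2+1 = 2*j+3 from rfl] using Nat.fib_add (2*j+2) (2*j+2)

lemma A4 : Nat.fib (4*j+6) = Nat.fib (2*j+2) * Nat.fib (2*j+3) + Nat.fib (2*j+3) * Nat.fib (2*j+4) := by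
  simpa [show 2*j+2+(2*j+3)+1 = 4*j+6 by ring, show 2*j+2+1 = 2*j+3 from rfl,
    show 2*j+3+1 = 2*j+4 from rfl] using Nat.fib_add (2*j+2) (2*j+3)

lemma I1 : (Nat.fib (4*j+3) : ℤ) = (Nat.fib (2*j+2) : ℤ) * (lucas (2*j+1) : ℤ) + 1 := by
  have c := cassini_even j
  push_cast [fsplit2] at c
  push_cast [A1, luc1, fsplit2]
  linear_combination c

lemma I2 : (Nat.fib (4*j+4) : ℤ) + 1 = (Nat.fib (2*j+1) : ℤ) * (lucas (2*j+3) : ℤ) := by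
  have c := cassini_even j
  push_cast [fsplit2] at c
  push_cast [A2, luc3, fsplit4, fsplit3, fsplit2]
  linear_combination -c

lemma I5 : (Nat.fib (4*j+4) : ℤ) = (Nat.fib (2*j+3) : ℤ) * (lucas (2*j+1) : ℤ) + 1 := by
  have c := cassini_even j
  push_cast [fsplit2] at c
  push_cast [A2, luc1, fsplit3, fsplit2]
  linear_combination c

lemma I3 : (Nat.fib (4*j+5) : ℤ) = (Nat.fib (2*j+2) : ℤ) * (lucas (2*j+3) : ℤ) + 1 := by
  have c := cassini_even j
  push_cast [fsplit2] at c
  push_cast [A3, luc3, fsplit4, fsplit3, fsplit2]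
  linear_combination c

lemma I4 : (Nat.fib (4*j+6) : ℤ) + 1 = (Nat.fib (2*j+4) : ℤ) * (lucas (2*j+2) : ℤ) := by
  have c := cassini_even j
  push_cast [fsplit2] at c
  push_cast [A4, luc2, fsplit4, fsplit3, fsplit2]
  linear_combination -c

end idents

lemma fib_ge (a b : ℕ) (h : a ≤ b) : Nat.fib a ≤ Nat.fib b := Nat.fib_mono h

lemma core (m t : ℕ) (ε : ℤ) (hε : ε = 1 ∨ ε = -1) (hm : 5 ≤ m) (ht1 : 1 ≤ t)
    (ht2 : t ≤ m - 1) (h4 : t = m - 1 → ε * (-1) ^ m = 1) (h5 : t ≠ m - 2) :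
    ¬ (Nat.fib m : ℤ) ∣ (Nat.fib (m + t) : ℤ) + ε := by
  intro h
  obtain ⟨m', rfl⟩ : ∃ m', m = m' + 5 := ⟨m - 5, by omega⟩
  -- step 1 : fib m ∣ fib (m-1) * fib t + ε
  have hsplit : Nat.fib (m' + 5 + t) =
      Nat.fib (m' + 4) * Nat.fib t + Nat.fib (m' + 5) * Nat.fib (t + 1) := by
    simpa [show m' + 4 + t + 1 = m' + 5 + t by ring, show m' + 4 + 1 = m' + 5 from rfl]
      using Nat.fib_add (m' + 4) t
  obtain ⟨c, hc⟩ := h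
  have h1 : (Nat.fib (m' + 5) : ℤ) ∣ (Nat.fib (m' + 4) : ℤ) * Nat.fib t + ε := by
    refine ⟨c - Nat.fib (t + 1), ?_⟩
    push_cast [hsplit] at hc
    linear_combination hc
  -- step 2 : fib m ∣ fib (m-1) + δ * fib t  where δ = ε * (-1)^m
  have cas : (Nat.fib (m' + 4) : ℤ) ^ 2 =
      Nat.fib (m' + 3) * Nat.fib (m' + 5) + (-1) ^ (m' + 5) := by
    have := cassini (m' + 3)
    rw [show m' + 3 + 1 = m' + 4 from rfl, show m' + 3 + 2 = m' + 5 from rfl] at this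
    rw [this, show ((-1 : ℤ)) ^ (m' + 5) = (-1) ^ (m' + 3) * (-1) ^ 2 from by
      rw [← pow_add]]
    norm_num
  obtain ⟨d, hd⟩ := h1
  have h2 : (Nat.fib (m' + 5) : ℤ) ∣ (Nat.fib (m' + 4) : ℤ) + (ε * (-1) ^ (m' + 5)) * Nat.fib t := by
    refine ⟨ε * ((Nat.fib (m' + 4) : ℤ) * d - Nat.fib (m' + 3) * Nat.fib t), ?_⟩
    have he2 : ε ^ 2 = 1 := by rcases hε with rfl | rfl <;> norm_num
    linear_combination ε * (Nat.fib (m'+4) : ℤ) * hd - ε * (Nat.fib t : ℤ) * cas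
      - (Nat.fib (m'+4) : ℤ) * he2
  -- size facts
  set δ : ℤ := ε * (-1) ^ (m' + 5) with hδ
  have hδ1 : δ = 1 ∨ δ = -1 := by
    rcases hε with rfl | rfl <;> rcases Nat.even_or_odd (m' + 5) with he | he <;>
      simp [hδ, he.neg_one_pow, Even.neg_one_pow, Odd.neg_one_pow] <;> tauto
  have fpos : (0 : ℤ) < Nat.fib (m' + 4) := by
    exact_mod_cast Nat.fib_pos.mpr (by omega)
  have flt : (Nat.fib (m' + 4) : ℤ) < Nat.fib (m' + 5) := by
    exact_mod_cast Nat.fib_lt_fib_succ (n := m' + 4) (by omega)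
  have flt2 : (Nat.fib (m' + 3) : ℤ) < Nat.fib (m' + 4) := by
    exact_mod_cast Nat.fib_lt_fib_succ (n := m' + 3) (by omega)
  have fib_split : (Nat.fib (m' + 5) : ℤ) = Nat.fib (m' + 3) + Nat.fib (m' + 4) := by
    exact_mod_cast (Nat.fib_add_two (n := m' + 3))
  rcases hδ1 with hδ1 | hδ1
  · -- δ = 1
    rcases Nat.lt_or_ge t (m' + 3) with htc | htc
    · -- t ≤ m' + 2 : 0 < x < fib m
      have hle : (Nat.fib t : ℤ) ≤ Nat.fib (m' + 2) := by
        exact_mod_cast fib_ge t (m' + 2) (by omega)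
      have flt3 : (Nat.fib (m' + 2) : ℤ) < Nat.fib (m' + 3) := by
        exact_mod_cast Nat.fib_lt_fib_succ (n := m' + 2) (by omega)
      have hb := Int.le_of_dvd (by rw [hδ1]; push_cast; positivity) h2
      rw [hδ1] at hb
      linarith
    · -- t = m' + 4 (t = m-2 excluded) : fib m ∣ 2 * fib (m-1)
      have ht4 : t = m' + 4 := by omega
      subst ht4
      have h2' : (Nat.fib (m' + 5) : ℤ) ∣ 2 * Nat.fib (m' + 4) := by
        have := h2; rw [hδ1] at this
        exact (by linarith : ((Nat.fib (m'+4):ℤ) + 1 * Nat.fib (m'+4)) = 2 * Nat.fib (m'+4)) ▸ this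
      have h2n : Nat.fib (m' + 5) ∣ 2 * Nat.fib (m' + 4) := by exact_mod_cast h2'
      have hcop : Nat.Coprime (Nat.fib (m' + 5)) (Nat.fib (m' + 4)) :=
        (Nat.fib_coprime_fib_succ (m' + 4)).symm
      have : Nat.fib (m' + 5) ∣ 2 := (Nat.Coprime.dvd_of_dvd_mul_right hcop h2n)
      have h5' : (5 : ℕ) ≤ Nat.fib (m' + 5) := by
        calc (5 : ℕ) = Nat.fib 5 := by decide
        _ ≤ Nat.fib (m' + 5) := fib_ge 5 (m' + 5) (by omega)
      have := Nat.le_of_dvd (by norm_num) this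
      omega
  · -- δ = -1 : t ≤ m-2, so t ≤ m'+2 (h5 : t ≠ m'+3), x ∈ (0, fib m)
    have htm : t ≠ m' + 4 := by
      intro he; have := h4 (by omega); rw [hδ1] at this; norm_num at this
    have htc : t ≤ m' + 3 := by omega
    have hle : (Nat.fib t : ℤ) ≤ Nat.fib (m' + 3) := by
      exact_mod_cast fib_ge t (m' + 3) htc
    have hb := Int.le_of_dvd (by rw [hδ1]; linarith) h2
    rw [hδ1] at hb
    linarith

lemma main1 (k : ℕ) (hk : 1 ≤ k) :
    signedFibSum (4 * k) = -((Nat.fib (2 * k) : ℤ) * lucas (2 * k - 1)) ∧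
    signedFibSum (4 * k + 1) = (Nat.fib (2 * k - 1) : ℤ) * lucas (2 * k + 1) ∧
    signedFibSum (4 * k + 2) = -((Nat.fib (2 * k) : ℤ) * lucas (2 * k + 1)) ∧
    signedFibSum (4 * k + 3) = (Nat.fib (2 * k + 2) : ℤ) * lucas (2 * k) := by
  obtain ⟨j, rfl⟩ : ∃ j, k = j + 1 := ⟨k - 1, by omega⟩
  refine ⟨?_, ?_, ?_, ?_⟩
  · rw [show 4 * (j + 1) = 4 * j + 3 + 1 by ring, sfs,
      Odd.neg_one_pow ⟨2 * j + 1, by ring⟩,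
      show 2 * (j + 1) - 1 = 2 * j + 1 by omega, show 2 * (j + 1) = 2 * j + 2 by ring]
    linear_combination -I1 j
  · rw [show 4 * (j + 1) + 1 = 4 * j + 4 + 1 by ring, sfs,
      Even.neg_one_pow ⟨2 * j + 2, by ring⟩,
      show 2 * (j + 1) - 1 = 2 * j + 1 by omega, show 2 * (j + 1) + 1 = 2 * j + 3 by ring]
    linear_combination I2 j
  · rw [show 4 * (j + 1) + 2 = 4 * j + 5 + 1 by ring, sfs,
      Odd.neg_one_pow ⟨2 * j + 2, by ring⟩,
      show 2 * (j + 1) + 1 = 2 * j + 3 by ring, show 2 * (j + 1) = 2 * j + 2 by ring]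
    linear_combination -I3 j
  · rw [show 4 * (j + 1) + 3 = 4 * j + 6 + 1 by ring, sfs,
      Even.neg_one_pow ⟨2 * j + 3, by ring⟩,
      show 2 * (j + 1) + 2 = 2 * j + 4 by ring, show 2 * (j + 1) = 2 * j + 2 by ring]
    linear_combination I4 j

lemma fib_big (a : ℕ) (h : 7 ≤ a) : (13 : ℤ) ≤ (Nat.fib a : ℤ) := by
  have : (13 : ℕ) ≤ Nat.fib a := le_trans (by decide) (fib_ge 7 a h)
  exact_mod_cast this

lemma nondvd1 (j m : ℕ) (hm : 2 * (j + 2) < m)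
    (hdvd : (Nat.fib m : ℤ) ∣ signedFibSum (4 * (j + 2))) : False := by
  have hS : signedFibSum (4 * (j + 2)) = -(Nat.fib (4 * j + 7) : ℤ) + 1 := by
    rw [show 4 * (j + 2) = 4 * j + 7 + 1 by ring, sfs, Odd.neg_one_pow ⟨2 * j + 3, by ring⟩]
    ring
  rw [hS] at hdvd
  obtain ⟨c, hc⟩ := hdvd
  have h : (Nat.fib m : ℤ) ∣ (Nat.fib (4 * j + 7) : ℤ) - 1 := ⟨-c, by linear_combination -hc⟩
  have f13 := fib_big (4 * j + 7) (by omega)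
  have hmlt : m < 4 * j + 7 := by
    by_contra hcon
    push_neg at hcon
    have h1 : (Nat.fib (4 * j + 7) : ℤ) ≤ Nat.fib m := by exact_mod_cast fib_ge _ _ hcon
    have h2 := Int.le_of_dvd (by linarith) h
    linarith
  refine core m (4 * j + 7 - m) (-1) (Or.inr rfl) (by omega) (by omega) (by omega)
    (fun ht => absurd ht (by omega)) (by omega) ?_
  rw [show m + (4 * j + 7 - m) = 4 * j + 7 by omega]
  simpa [sub_eq_add_neg] using h

lemma nondvd3 (j m : ℕ) (hm : 2 * (j + 2) < m)
    (hdvd : (Nat.fib m : ℤ) ∣ signedFibSum (4 * (j + 2) + 2)) : False := by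
  have hS : signedFibSum (4 * (j + 2) + 2) = -(Nat.fib (4 * j + 9) : ℤ) + 1 := by
    rw [show 4 * (j + 2) + 2 = 4 * j + 9 + 1 by ring, sfs, Odd.neg_one_pow ⟨2 * j + 4, by ring⟩]
    ring
  rw [hS] at hdvd
  obtain ⟨c, hc⟩ := hdvd
  have h : (Nat.fib m : ℤ) ∣ (Nat.fib (4 * j + 9) : ℤ) - 1 := ⟨-c, by linear_combination -hc⟩
  have f13 := fib_big (4 * j + 9) (by omega)
  have hmlt : m < 4 * j + 9 := by
    by_contra hcon
    push_neg at hcon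
    have h1 : (Nat.fib (4 * j + 9) : ℤ) ≤ Nat.fib m := by exact_mod_cast fib_ge _ _ hcon
    have h2 := Int.le_of_dvd (by linarith) h
    linarith
  refine core m (4 * j + 9 - m) (-1) (Or.inr rfl) (by omega) (by omega) (by omega)
    (fun ht => ?_) (by omega) ?_
  · have hmo : m = 2 * j + 5 := by omega
    rw [hmo, Odd.neg_one_pow ⟨j + 2, by ring⟩]
    norm_num
  · rw [show m + (4 * j + 9 - m) = 4 * j + 9 by omega]
    simpa [sub_eq_add_neg] using h

lemma nondvd2 (j m : ℕ) (hm : 2 * (j + 2) - 1 < m)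
    (hdvd : (Nat.fib m : ℤ) ∣ signedFibSum (4 * (j + 2) + 1)) : False := by
  have hS : signedFibSum (4 * (j + 2) + 1) = (Nat.fib (4 * j + 8) : ℤ) + 1 := by
    rw [show 4 * (j + 2) + 1 = 4 * j + 8 + 1 by ring, sfs, Even.neg_one_pow ⟨2 * j + 4, by ring⟩]
    ring
  rw [hS] at hdvd
  have f13 := fib_big (4 * j + 7) (by omega)
  have hmge : 2 * j + 4 ≤ m := by omega
  rcases eq_or_ne m (2 * j + 5) with rfl | hm5
  · -- the tricky case m = 2k+1 : use I5
    have hI := I5 (j + 1)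
    rw [show 4 * (j + 1) + 4 = 4 * j + 8 by ring, show 2 * (j + 1) + 3 = 2 * j + 5 by ring,
      show 2 * (j + 1) + 1 = 2 * j + 3 by ring] at hI
    have hI' : (Nat.fib (2 * j + 5) : ℤ) ∣ (Nat.fib (4 * j + 8) : ℤ) - 1 :=
      ⟨(lucas (2 * j + 3) : ℤ), by rw [hI]; ring⟩
    have h2 : (Nat.fib (2 * j + 5) : ℤ) ∣ 2 := by
      have := dvd_sub hdvd hI'
      rwa [show ((Nat.fib (4 * j + 8) : ℤ) + 1) - ((Nat.fib (4 * j + 8) : ℤ) - 1) = 2 by ring]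
        at this
    have hle := Int.le_of_dvd (by norm_num) h2
    have h5 : (5 : ℤ) ≤ (Nat.fib (2 * j + 5) : ℤ) := by
      have : (5 : ℕ) ≤ Nat.fib (2 * j + 5) := le_trans (by decide) (fib_ge 5 (2 * j + 5) (by omega))
      exact_mod_cast this
    linarith
  rcases eq_or_ne m (2 * j + 4) with rfl | hm4
  · -- m = 2k : fib (2k) ∣ fib (4k)
    have hd : (Nat.fib (2 * j + 4) : ℤ) ∣ (Nat.fib (4 * j + 8) : ℤ) := by
      exact_mod_cast Nat.fib_dvd (2 * j + 4) (4 * j + 8) ⟨2, by ring⟩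
    have h1 : (Nat.fib (2 * j + 4) : ℤ) ∣ 1 := by
      have := dvd_sub hdvd hd
      rwa [show ((Nat.fib (4 * j + 8) : ℤ) + 1) - (Nat.fib (4 * j + 8) : ℤ) = 1 by ring] at this
    have hle := Int.le_of_dvd one_pos h1
    have h3 : (3 : ℤ) ≤ (Nat.fib (2 * j + 4) : ℤ) := by
      have : (3 : ℕ) ≤ Nat.fib (2 * j + 4) := le_trans (by decide) (fib_ge 4 (2 * j + 4) (by omega))
      exact_mod_cast this
    linarith
  rcases Nat.lt_or_ge m (4 * j + 8) with hlt | hge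
  · -- main case via core, with 2j+6 ≤ m ≤ 4j+7, t = 4j+8-m ∈ [1, 2j+2] ≤ m-4
    refine core m (4 * j + 8 - m) 1 (Or.inl rfl) (by omega) (by omega) (by omega)
      (fun ht => absurd ht (by omega)) (by omega) ?_
    rw [show m + (4 * j + 8 - m) = 4 * j + 8 by omega]
    exact hdvd
  rcases eq_or_ne m (4 * j + 8) with rfl | hm8
  · have h1 : (Nat.fib (4 * j + 8) : ℤ) ∣ 1 := by
      have := dvd_sub hdvd (dvd_refl _)
      rwa [show ((Nat.fib (4 * j + 8) : ℤ) + 1) - (Nat.fib (4 * j + 8) : ℤ) = 1 by ring] at this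
    have hle := Int.le_of_dvd one_pos h1
    have := fib_big (4 * j + 8) (by omega)
    linarith
  · -- m ≥ 4j+9 : too big
    have h1 : (Nat.fib (4 * j + 9) : ℤ) ≤ Nat.fib m := by
      exact_mod_cast fib_ge _ _ (by omega)
    have h2 : (Nat.fib (4 * j + 9) : ℤ) = Nat.fib (4 * j + 7) + Nat.fib (4 * j + 8) := by
      exact_mod_cast (Nat.fib_add_two (n := 4 * j + 7))
    have h3 := Int.le_of_dvd (by positivity) hdvd
    linarith

lemma nondvd4 (j m : ℕ) (hm : 2 * (j + 2) + 2 < m)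
    (hdvd : (Nat.fib m : ℤ) ∣ signedFibSum (4 * (j + 2) + 3)) : False := by
  have hS : signedFibSum (4 * (j + 2) + 3) = (Nat.fib (4 * j + 10) : ℤ) + 1 := by
    rw [show 4 * (j + 2) + 3 = 4 * j + 10 + 1 by ring, sfs, Even.neg_one_pow ⟨2 * j + 5, by ring⟩]
    ring
  rw [hS] at hdvd
  have hmge : 2 * j + 7 ≤ m := by omega
  rcases Nat.lt_or_ge m (4 * j + 10) with hlt | hge
  · refine core m (4 * j + 10 - m) 1 (Or.inl rfl) (by omega) (by omega) (by omega)
      (fun ht => absurd ht (by omega)) (by omega) ?_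
    rw [show m + (4 * j + 10 - m) = 4 * j + 10 by omega]
    exact hdvd
  rcases eq_or_ne m (4 * j + 10) with rfl | hm10
  · have h1 : (Nat.fib (4 * j + 10) : ℤ) ∣ 1 := by
      have := dvd_sub hdvd (dvd_refl _)
      rwa [show ((Nat.fib (4 * j + 10) : ℤ) + 1) - (Nat.fib (4 * j + 10) : ℤ) = 1 by ring] at this
    have hle := Int.le_of_dvd one_pos h1
    have := fib_big (4 * j + 10) (by omega)
    linarith
  · have h1 : (Nat.fib (4 * j + 11) : ℤ) ≤ Nat.fib m := by
      exact_mod_cast fib_ge _ _ (by omega)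
    have h2 : (Nat.fib (4 * j + 11) : ℤ) = Nat.fib (4 * j + 9) + Nat.fib (4 * j + 10) := by
      exact_mod_cast (Nat.fib_add_two (n := 4 * j + 9))
    have h3 := Int.le_of_dvd (by positivity) hdvd
    have := fib_big (4 * j + 9) (by omega)
    linarith

/-- Factorizations of the partial sums of the signed Fibonacci sequence, and
the maximal index of a Fibonacci number dividing them. -/
theorem signed_fib_partial_sums :
    (∀ k : ℕ, 1 ≤ k →
      signedFibSum (4 * k) = -((Nat.fib (2 * k) : ℤ) * lucas (2 * k - 1)) ∧
      signedFibSum (4 * k + 1) = (Nat.fib (2 * k - 1) : ℤ) * lucas (2 * k + 1) ∧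
      signedFibSum (4 * k + 2) = -((Nat.fib (2 * k) : ℤ) * lucas (2 * k + 1)) ∧
      signedFibSum (4 * k + 3) = (Nat.fib (2 * k + 2) : ℤ) * lucas (2 * k)) ∧
    (∀ k : ℕ, 2 ≤ k →
      ((Nat.fib (2 * k) : ℤ) ∣ signedFibSum (4 * k) ∧
        ∀ m : ℕ, 2 * k < m → ¬ (Nat.fib m : ℤ) ∣ signedFibSum (4 * k)) ∧
      ((Nat.fib (2 * k - 1) : ℤ) ∣ signedFibSum (4 * k + 1) ∧
        ∀ m : ℕ, 2 * k - 1 < m → ¬ (Nat.fib m : ℤ) ∣ signedFibSum (4 * k + 1)) ∧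
      ((Nat.fib (2 * k) : ℤ) ∣ signedFibSum (4 * k + 2) ∧
        ∀ m : ℕ, 2 * k < m → ¬ (Nat.fib m : ℤ) ∣ signedFibSum (4 * k + 2)) ∧
      ((Nat.fib (2 * k + 2) : ℤ) ∣ signedFibSum (4 * k + 3) ∧
        ∀ m : ℕ, 2 * k + 2 < m → ¬ (Nat.fib m : ℤ) ∣ signedFibSum (4 * k + 3))) := by
  refine ⟨main1, fun k hk => ?_⟩
  obtain ⟨j, rfl⟩ : ∃ j, k = j + 2 := ⟨k - 2, by omega⟩
  obtain ⟨e1, e2, e3, e4⟩ := main1 (j + 2) (by omega)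
  refine ⟨⟨⟨-(lucas (2 * (j + 2) - 1) : ℤ), by rw [e1]; ring⟩, fun m hm h => nondvd1 j m hm h⟩,
    ⟨⟨(lucas (2 * (j + 2) + 1) : ℤ), by rw [e2]⟩, fun m hm h => nondvd2 j m hm h⟩,
    ⟨⟨-(lucas (2 * (j + 2) + 1) : ℤ), by rw [e3]; ring⟩, fun m hm h => nondvd3 j m hm h⟩,
    ⟨⟨(lucas (2 * (j + 2)) : ℤ), by rw [e4]⟩, fun m hm h => nondvd4 j m hm h⟩⟩
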